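/- Let n ≥ 2, p ≥ n, and let x_1, …, x_{p-n+1} be indeterminates. Define the square matrix E indexed by I⁺(n,p) = {ξ ∈ ℕ^n : ξ_i ≥ 1, ∑ξ_i ≤ p} by E_{ij} = ∏_{l=1}^n x_{ξ_{j,l}}^{ξ_{i,l}}. Then det E = C · ∏_{j=1}^{p-n+1} x_j^{Λ(j)} · ∏_{1≤i<j≤p-n+1} (x_j - x_i)^{Λ(j)} for some nonzero constant C, where Λ(j) = Λ_{I⁺(n,p)}(j) is the total number of occurrences of j among coordinates of elements of I⁺(n,p). In particular, det E is nonzero whenever the x_j are nonzero and pairwise distinct. -/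

import Mathlib

/-- The set I⁺(n,p) of vectors in ℕ^n with strictly positive coordinates and
coordinate sum at most p. -/
def Iplus (n p : ℕ) : Finset (Fin n → ℕ) :=
  ((Finset.range (p + 1)).biUnion (fun m => Finset.Nat.antidiagonalTuple n m)).filter
    (fun ξ => ∀ i, 1 ≤ ξ i)

/-- Λ_{I⁺(n,p)}(j): total number of occurrences of j among coordinates of
vectors in I⁺(n,p). -/
def Lam (n p j : ℕ) : ℕ :=
  ∑ ξ ∈ Iplus n p, (Finset.univ.filter (fun i => ξ i = j)).card

open Finset Polynomial

lemma mem_Iplus {n p : ℕ} {ξ : Fin n → ℕ} :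
    ξ ∈ Iplus n p ↔ (∀ i, 1 ≤ ξ i) ∧ ∑ i, ξ i ≤ p := by
  simp [Iplus, Finset.Nat.mem_antidiagonalTuple, Nat.lt_succ_iff]
  tauto

lemma coord_mem {n p : ℕ} (hn : 2 ≤ n) {ξ : Fin n → ℕ} (hξ : ξ ∈ Iplus n p) (l : Fin n) :
    ξ l ∈ Finset.Icc 1 (p - n + 1) := by
  obtain ⟨h1, h2⟩ := mem_Iplus.mp hξ
  have hsum : ξ l + (n - 1) ≤ ∑ i, ξ i := by
    rw [← Finset.add_sum_erase _ ξ (Finset.mem_univ l)]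
    have : (n - 1 : ℕ) ≤ ∑ i ∈ Finset.univ.erase l, ξ i := by
      calc (n-1 : ℕ) = (Finset.univ.erase l).card := by
              rw [Finset.card_erase_of_mem (Finset.mem_univ l), Finset.card_univ, Fintype.card_fin]
        _ ≤ ∑ i ∈ Finset.univ.erase l, ξ i :=
            Finset.card_nsmul_le_sum _ _ 1 (fun i _ => h1 i) |>.trans_eq' (by simp)
    omega
  have := h1 l
  simp only [Finset.mem_Icc]
  omega

lemma det_tri {ι : Type*} [Fintype ι] [DecidableEq ι] (f : ι → ℕ) (M : Matrix ι ι ℚ)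
    (h : ∀ i j, M i j ≠ 0 → i = j ∨ f i < f j) : M.det = ∏ i, M i i := by
  rw [Matrix.det_apply]
  rw [Finset.sum_eq_single (1 : Equiv.Perm ι)]
  · simp
  · intro σ _ hσ
    suffices hz : ∏ i, M (σ i) i = 0 by simp [hz]
    by_contra hnz
    have hfac : ∀ i, M (σ i) i ≠ 0 := fun i hi =>
      hnz (Finset.prod_eq_zero (Finset.mem_univ i) hi)
    have hle : ∀ i, f (σ i) ≤ f i := fun i => by
      rcases h _ _ (hfac i) with h1 | h2
      · rw [h1]
      · exact h2.le
    obtain ⟨j, hj⟩ : ∃ j, σ j ≠ j := by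
      by_contra hc
      push_neg at hc
      exact hσ (Equiv.ext hc)
    have hstrict : f (σ j) < f j := by
      rcases h _ _ (hfac j) with h1 | h2
      · exact absurd h1 hj
      · exact h2
    have hlt := Finset.sum_lt_sum (fun i _ => hle i) ⟨j, Finset.mem_univ j, hstrict⟩
    rw [Equiv.sum_comp σ f] at hlt
    exact lt_irrefl _ hlt
  · intro h1; exact absurd (Finset.mem_univ 1) h1

noncomputable def Qp (x : ℕ → ℚ) (m : ℕ) : Polynomial ℚ :=
  Polynomial.X * ∏ k ∈ Finset.Ico 1 m, (Polynomial.X - Polynomial.C (x k))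

lemma Qp_monic (x : ℕ → ℚ) (m : ℕ) : (Qp x m).Monic :=
  monic_X.mul (monic_prod_of_monic _ _ fun _ _ => monic_X_sub_C _)

lemma Qp_natDegree (x : ℕ → ℚ) (m : ℕ) (hm : 1 ≤ m) : (Qp x m).natDegree = m := by
  rw [Qp, monic_X.natDegree_mul (monic_prod_of_monic _ _ fun _ _ => monic_X_sub_C _),
    natDegree_X, natDegree_prod_of_monic _ _ (fun k _ => monic_X_sub_C _)]
  simp only [natDegree_X_sub_C, Finset.sum_const, Nat.card_Ico, smul_eq_mul, mul_one]
  omega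

lemma Qp_coeff_zero (x : ℕ → ℚ) (m : ℕ) : (Qp x m).coeff 0 = 0 := by
  rw [Qp, mul_coeff_zero, coeff_X_zero, zero_mul]

lemma Qp_coeff_self (x : ℕ → ℚ) (m : ℕ) (hm : 1 ≤ m) : (Qp x m).coeff m = 1 := by
  have := (Qp_monic x m).coeff_natDegree
  rwa [Qp_natDegree x m hm] at this

lemma Qp_coeff_gt (x : ℕ → ℚ) (m j : ℕ) (hm : 1 ≤ m) (hj : m < j) : (Qp x m).coeff j = 0 :=
  coeff_eq_zero_of_natDegree_lt (by rwa [Qp_natDegree x m hm])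

lemma Qp_eval (x : ℕ → ℚ) (m : ℕ) (y : ℚ) :
    (Qp x m).eval y = y * ∏ k ∈ Finset.Ico 1 m, (y - x k) := by
  simp [Qp, eval_prod]

lemma Qp_eval_sum (x : ℕ → ℚ) (m p : ℕ) (hm : 1 ≤ m) (hmp : m ≤ p) (y : ℚ) :
    (Qp x m).eval y = ∑ j ∈ Finset.range (p + 1), (Qp x m).coeff j * y ^ j :=
  eval_eq_sum_range' (by rw [Qp_natDegree x m hm]; omega) y

lemma prod_coord (n p : ℕ) (hn : 2 ≤ n) (g : ℕ → ℚ) :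
    ∏ ξ ∈ Iplus n p, ∏ l, g (ξ l) = ∏ j ∈ Finset.Icc 1 (p - n + 1), g j ^ Lam n p j := by
  have h1 : ∀ ξ ∈ Iplus n p, ∏ l, g (ξ l) =
      ∏ j ∈ Finset.Icc 1 (p - n + 1), g j ^ (Finset.univ.filter (fun i => ξ i = j)).card := by
    intro ξ hξ
    rw [← Finset.prod_fiberwise_of_maps_to' (fun l _ => coord_mem hn hξ l) g]
    exact Finset.prod_congr rfl fun j _ => Finset.prod_const _
  rw [Finset.prod_congr rfl h1, Finset.prod_comm]
  simp only [Lam]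
  exact Finset.prod_congr rfl fun j _ => Finset.prod_pow_eq_pow_sum _ _ _

lemma key (n p : ℕ) (hn : 2 ≤ n) (hp : n ≤ p) (x : ℕ → ℚ) :
    Matrix.det (fun ξ η : ↥(Iplus n p) =>
        ∏ l, x ((η : Fin n → ℕ) l) ^ ((ξ : Fin n → ℕ) l)) =
      (∏ j ∈ Finset.Icc 1 (p - n + 1), x j ^ Lam n p j) *
        ∏ j ∈ Finset.Icc 1 (p - n + 1), ∏ i ∈ Finset.Ico 1 j,
          (x j - x i) ^ Lam n p j := by
  classical
  set S := Iplus n p with hS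
  have hone : ∀ ξ : ↥S, ∀ l, 1 ≤ ξ.1 l := fun ξ l => (mem_Iplus.mp ξ.2).1 l
  have hlep : ∀ ξ : ↥S, ∀ l, ξ.1 l ≤ p := by
    intro ξ l
    have := Finset.mem_Icc.mp (coord_mem hn ξ.2 l)
    omega
  set f : ↥S → ℕ := fun κ => ∑ l, κ.1 l with hf
  set M : Matrix ↥S ↥S ℚ := fun ξ η => ∏ l, x (η.1 l) ^ ξ.1 l with hM
  set U : Matrix ↥S ↥S ℚ := fun ξ κ => ∏ l, (Qp x (ξ.1 l)).coeff (κ.1 l) with hU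
  set N : Matrix ↥S ↥S ℚ := fun ξ η => ∏ l, (Qp x (ξ.1 l)).eval (x (η.1 l)) with hN
  have hsum_lt : ∀ ξ η : ↥S, (∀ l, ξ.1 l ≤ η.1 l) → ξ ≠ η → f ξ < f η := by
    intro ξ η hle hne
    refine Finset.sum_lt_sum (fun l _ => hle l) ?_
    by_contra hc
    push_neg at hc
    exact hne (Subtype.ext (funext fun l => le_antisymm (hle l) (hc l (Finset.mem_univ l))))
  -- N = U * M
  have hNUM : N = U * M := by
    ext ξ η
    rw [Matrix.mul_apply]
    have step1 : ∑ κ : ↥S, U ξ κ * M κ η =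
        ∑ v ∈ S, (∏ l, (Qp x (ξ.1 l)).coeff (v l)) * ∏ l, x (η.1 l) ^ (v l) := by
      rw [Finset.univ_eq_attach]
      exact Finset.sum_attach S (fun v =>
        (∏ l, (Qp x (ξ.1 l)).coeff (v l)) * ∏ l, x (η.1 l) ^ (v l))
    rw [step1]
    have hsub : S ⊆ Fintype.piFinset (fun _ : Fin n => Finset.range (p + 1)) := by
      intro v hv
      rw [Fintype.mem_piFinset]
      intro l
      rw [Finset.mem_range]
      have := Finset.mem_Icc.mp (coord_mem hn hv l)
      omega
    have hvan : ∀ v ∈ Fintype.piFinset (fun _ : Fin n => Finset.range (p + 1)), v ∉ S →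
        (∏ l, (Qp x (ξ.1 l)).coeff (v l)) * ∏ l, x (η.1 l) ^ (v l) = 0 := by
      intro v _ hvS
      by_contra hterm
      have hc : ∀ l, (Qp x (ξ.1 l)).coeff (v l) ≠ 0 := by
        intro l hl
        exact hterm (by rw [Finset.prod_eq_zero (Finset.mem_univ l) hl, zero_mul])
      have hv1 : ∀ l, 1 ≤ v l := by
        intro l
        by_contra hc0
        exact hc l (by rw [Nat.lt_one_iff.mp (not_le.mp hc0), Qp_coeff_zero])
      have hvle : ∀ l, v l ≤ ξ.1 l := by
        intro l
        by_contra hc0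
        exact hc l (Qp_coeff_gt x _ _ (hone ξ l) (not_le.mp hc0))
      exact hvS (mem_Iplus.mpr ⟨hv1,
        le_trans (Finset.sum_le_sum fun l _ => hvle l) (mem_Iplus.mp ξ.2).2⟩)
    rw [Finset.sum_subset hsub hvan]
    have step2 : ∀ v ∈ Fintype.piFinset (fun _ : Fin n => Finset.range (p + 1)),
        (∏ l, (Qp x (ξ.1 l)).coeff (v l)) * ∏ l, x (η.1 l) ^ (v l) =
        ∏ l, ((Qp x (ξ.1 l)).coeff (v l) * x (η.1 l) ^ (v l)) := by
      intro v _
      rw [Finset.prod_mul_distrib]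
    rw [Finset.sum_congr rfl step2]
    calc N ξ η = ∏ l, ∑ j ∈ Finset.range (p + 1), (Qp x (ξ.1 l)).coeff j * x (η.1 l) ^ j :=
          Finset.prod_congr rfl fun l _ => Qp_eval_sum x _ p (hone ξ l) (hlep ξ l) _
      _ = _ := Finset.prod_univ_sum (fun _ : Fin n => Finset.range (p + 1))
          (fun l j => (Qp x (ξ.1 l)).coeff j * x (η.1 l) ^ j)
  -- det U = 1
  have hdetU : U.det = 1 := by
    have htri : ∀ i j : ↥S, U.transpose i j ≠ 0 → i = j ∨ f i < f j := by
      intro κ ξ hne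
      rw [Matrix.transpose_apply] at hne
      have hle : ∀ l, κ.1 l ≤ ξ.1 l := by
        intro l
        by_contra hc0
        exact hne (Finset.prod_eq_zero (Finset.mem_univ l)
          (Qp_coeff_gt x _ _ (hone ξ l) (not_le.mp hc0)))
      rcases eq_or_ne κ ξ with h | h
      · exact Or.inl h
      · exact Or.inr (hsum_lt κ ξ hle h)
    rw [← Matrix.det_transpose, det_tri f _ htri]
    refine Finset.prod_eq_one fun ξ _ => ?_
    rw [Matrix.transpose_apply]
    exact Finset.prod_eq_one fun l _ => Qp_coeff_self x _ (hone ξ l)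
  -- det N = product of diagonal
  have hdetN : N.det = ∏ ξ : ↥S, N ξ ξ := by
    refine det_tri f _ ?_
    intro ξ η hne
    have hle : ∀ l, ξ.1 l ≤ η.1 l := by
      intro l
      by_contra hc0
      push_neg at hc0
      refine hne (Finset.prod_eq_zero (Finset.mem_univ l) ?_)
      rw [Qp_eval]
      rw [Finset.prod_eq_zero (i := η.1 l)
        (Finset.mem_Ico.mpr ⟨hone η l, hc0⟩) (sub_self (x (η.1 l))), mul_zero]
    rcases eq_or_ne ξ η with h | h
    · exact Or.inl h
    · exact Or.inr (hsum_lt ξ η hle h)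
  -- conclude
  have hdetM : M.det = ∏ ξ : ↥S, N ξ ξ := by
    have h2 := congrArg Matrix.det hNUM
    rw [Matrix.det_mul, hdetU, one_mul] at h2
    rw [← h2, hdetN]
  rw [hdetM]
  have hdiag : ∏ ξ : ↥S, N ξ ξ =
      ∏ v ∈ S, ∏ l, (x (v l) * ∏ k ∈ Finset.Ico 1 (v l), (x (v l) - x k)) := by
    rw [Finset.univ_eq_attach, ← Finset.prod_attach S
      (fun v => ∏ l, (x (v l) * ∏ k ∈ Finset.Ico 1 (v l), (x (v l) - x k)))]
    exact Finset.prod_congr rfl fun ξ _ => Finset.prod_congr rfl fun l _ => Qp_eval x _ _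
  rw [hdiag, prod_coord n p hn (fun j => x j * ∏ k ∈ Finset.Ico 1 j, (x j - x k))]
  rw [← Finset.prod_mul_distrib]
  refine Finset.prod_congr rfl fun j _ => ?_
  rw [mul_pow, Finset.prod_pow]

/-- Factorization of the determinant of E, E_{ξη} = ∏_l x_{η_l}^{ξ_l}:
det E = C · ∏_j x_j^{Λ(j)} · ∏_{i<j} (x_j - x_i)^{Λ(j)} with C ≠ 0 a constant;
in particular det E ≠ 0 when the x_j are nonzero and pairwise distinct. -/
theorem detE_factorization (n p : ℕ) (hn : 2 ≤ n) (hp : n ≤ p) :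
    ∃ C : ℚ, C ≠ 0 ∧
      (∀ x : ℕ → ℚ,
        Matrix.det (fun ξ η : ↥(Iplus n p) =>
            ∏ l, x ((η : Fin n → ℕ) l) ^ ((ξ : Fin n → ℕ) l)) =
          C * (∏ j ∈ Finset.Icc 1 (p - n + 1), x j ^ Lam n p j) *
            ∏ j ∈ Finset.Icc 1 (p - n + 1), ∏ i ∈ Finset.Ico 1 j,
              (x j - x i) ^ Lam n p j) ∧
      (∀ x : ℕ → ℚ,
        (∀ j ∈ Finset.Icc 1 (p - n + 1), x j ≠ 0) →
        (∀ i ∈ Finset.Icc 1 (p - n + 1), ∀ j ∈ Finset.Icc 1 (p - n + 1),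
            i ≠ j → x i ≠ x j) →
        Matrix.det (fun ξ η : ↥(Iplus n p) =>
            ∏ l, x ((η : Fin n → ℕ) l) ^ ((ξ : Fin n → ℕ) l)) ≠ 0) := by
  refine ⟨1, one_ne_zero, fun x => by rw [key n p hn hp x]; ring, ?_⟩
  intro x hx hxx
  rw [key n p hn hp x]
  refine mul_ne_zero (Finset.prod_ne_zero_iff.mpr fun j hj => pow_ne_zero _ (hx j hj)) ?_
  refine Finset.prod_ne_zero_iff.mpr fun j hj => Finset.prod_ne_zero_iff.mpr
    fun i hi => pow_ne_zero _ ?_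
  have hj' := Finset.mem_Icc.mp hj
  have hi' := Finset.mem_Ico.mp hi
  refine sub_ne_zero.mpr (Ne.symm (hxx i ?_ j hj ?_))
  · exact Finset.mem_Icc.mpr ⟨hi'.1, by omega⟩
  · omega
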